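/- Let X be a compact Hausdorff abelian topological group, let A be a continuous group automorphism of X that is quasi-unipotent of type (m,l) (A^m = I + N with N^l = 0), let b ∈ X, and let T x = A x + b. Let φ : X → ℂ be a continuous character of X and x ∈ X. Then for every p with 1 ≤ p ≤ m there exists a real polynomial P of degree at most l (depending on p, φ, x) such that φ(T^n x) = e^{2πi P(q)} for every n ≥ l of the form n = qm + p with q ∈ ℕ. -/

import Mathlib

open Finset

private lemma hockey_stick (k : ℕ) : ∀ q : ℕ, ∑ j ∈ range q, j.choose k = q.choose (k+1) := by
  intro q
  induction q with
  | zero => simp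
  | succ q ih => rw [sum_range_succ, ih, Nat.choose_succ_succ q k, Nat.add_comm]

private noncomputable def binPoly (k : ℕ) : Polynomial ℝ :=
  (k.factorial : ℝ)⁻¹ • descPochhammer ℝ k

private lemma binPoly_eval (k q : ℕ) : (binPoly k).eval (q : ℝ) = (q.choose k : ℝ) := by
  have h : ((k.factorial : ℝ)) ≠ 0 := Nat.cast_ne_zero.mpr k.factorial_ne_zero
  rw [binPoly, Polynomial.eval_smul, smul_eq_mul, descPochhammer_eval_eq_descFactorial,
    Nat.descFactorial_eq_factorial_mul_choose]
  push_cast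
  field_simp

private lemma binPoly_deg (k : ℕ) : (binPoly k).natDegree ≤ k := by
  refine (Polynomial.natDegree_smul_le _ _).trans ?_
  rw [descPochhammer_natDegree]

private lemma end_sum_apply {X : Type*} [AddCommGroup X] (n : ℕ) (f : ℕ → AddMonoid.End X)
    (z : X) : (∑ k ∈ range n, f k) z = ∑ k ∈ range n, f k z := by
  induction n with
  | zero => simp
  | succ n ih => rw [Finset.sum_range_succ, Finset.sum_range_succ, ← ih]; rfl

theorem character_orbit_polynomial_quasiUnipotent
    {X : Type*} [AddCommGroup X] [TopologicalSpace X] [IsTopologicalAddGroup X]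
    [CompactSpace X] [T2Space X]
    (m l : ℕ) (hm : 1 ≤ m) (hl : 1 ≤ l)
    (A : AddAut X) (hAcont : Continuous A) (hAsymm : Continuous A.symm)
    (N : AddMonoid.End X)
    (hA : ∀ x : X, (m • A) x = x + N x) (hN : N ^ l = 0)
    (b : X) (T : X → X) (hT : ∀ x : X, T x = A x + b)
    (φ : X → ℂ) (hφcont : Continuous φ)
    (hφmul : ∀ x y : X, φ (x + y) = φ x * φ y)
    (hφabs : ∀ x : X, ‖φ x‖ = 1)
    (x : X) :
    ∀ p : ℕ, 1 ≤ p → p ≤ m →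
      ∃ P : Polynomial ℝ, P.natDegree ≤ l ∧
        ∀ n q : ℕ, n = q * m + p → l ≤ n →
          φ (T^[n] x) = Complex.exp (2 * Real.pi * Complex.I * (P.eval (q : ℝ))) := by
  intro p hp1 hpm
  obtain ⟨l', rfl⟩ : ∃ l', l = l' + 1 := ⟨l - 1, by omega⟩
  set L := l' + 1 with hL
  -- the endomorphism M = 1 + N, which agrees with A ^ m
  set M : AddMonoid.End X := 1 + N with hM
  have hMapp : ∀ z : X, M z = z + N z := by
    intro z; rw [hM]; rfl
  -- orbit formula
  have horbit : ∀ (n : ℕ) (z : X), T^[n] z = (n • A) z + T^[n] 0 := by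
    intro n
    induction n with
    | zero => intro z; simp
    | succ n ih =>
      intro z
      rw [Function.iterate_succ_apply', Function.iterate_succ_apply' T n 0, ih z, hT, hT,
        map_add]
      have h1 : ((n+1) • A) z = A ((n • A) z) := by rw [succ_nsmul']; rfl
      rw [h1, add_assoc]
  -- the map S = T^[m]
  set c : X := T^[m] 0 with hc
  have hS : ∀ z : X, T^[m] z = M z + c := by
    intro z
    rw [horbit m z, hA z, hMapp]
  -- powers of M
  have hMq : ∀ q : ℕ, M ^ q = ∑ k ∈ range L, q.choose k • N ^ k := by
    intro q
    induction q with
    | zero =>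
      rw [pow_zero, hL, Finset.sum_range_succ']
      simp
    | succ q ih =>
      rw [pow_succ, ih, Finset.sum_mul]
      have hterm : ∀ k, (q.choose k • N ^ k) * M = q.choose k • N ^ k + q.choose k • N ^ (k+1) := by
        intro k
        rw [smul_mul_assoc, hM, mul_add, mul_one, ← pow_succ, nsmul_add]
      rw [Finset.sum_congr rfl (fun k _ => hterm k), Finset.sum_add_distrib]
      have h2 : ∑ k ∈ range L, q.choose k • N ^ (k+1)
          = ∑ k ∈ range l', q.choose k • N ^ (k+1) := by
        rw [hL, Finset.sum_range_succ, hN, nsmul_zero, add_zero]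
      rw [h2, hL, Finset.sum_range_succ' (fun k => q.choose k • N ^ k) l',
        Finset.sum_range_succ' (fun k => (q+1).choose k • N ^ k) l']
      have h3 : ∀ k, (q+1).choose (k+1) • N ^ (k+1)
          = q.choose (k+1) • N ^ (k+1) + q.choose k • N ^ (k+1) := by
        intro k
        rw [Nat.choose_succ_succ q k, Nat.add_comm, add_smul]
      rw [Finset.sum_congr rfl (fun k _ => h3 k), Finset.sum_add_distrib]
      simp only [Nat.choose_zero_right]
      abel
  -- geometric sums of M
  have hGq : ∀ q : ℕ, (∑ j ∈ range q, M ^ j) = ∑ k ∈ range L, q.choose (k+1) • N ^ k := by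
    intro q
    rw [Finset.sum_congr rfl (fun j _ => hMq j), Finset.sum_comm]
    refine Finset.sum_congr rfl (fun k _ => ?_)
    rw [← Finset.sum_smul, hockey_stick]
  -- iterates of S
  have hiter : ∀ (q : ℕ) (z : X), (T^[m])^[q] z = (M ^ q) z + (∑ j ∈ range q, M ^ j) c := by
    intro q
    induction q with
    | zero => intro z; simp
    | succ q ih =>
      intro z
      rw [Function.iterate_succ_apply', ih z, hS, map_add]
      have h1 : (M ^ (q+1)) z = M ((M ^ q) z) := by rw [pow_succ']; rfl
      have h2 : (∑ j ∈ range (q+1), M ^ j) c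
          = (∑ j ∈ range q, M ^ (j+1)) c + c := by
        rw [Finset.sum_range_succ' (fun j => M ^ j) q, pow_zero]
        rfl
      have h3 : M ((∑ j ∈ range q, M ^ j) c) = (∑ j ∈ range q, M ^ (j+1)) c := by
        rw [end_sum_apply, end_sum_apply, map_sum]
        refine Finset.sum_congr rfl (fun j _ => ?_)
        rw [pow_succ']; rfl
      rw [h1, h2, h3, add_assoc]
  -- character basics
  have hφne : ∀ z : X, φ z ≠ 0 := by
    intro z h
    have := hφabs z
    rw [h] at this
    simp at this
  have hφ0 : φ 0 = 1 := by
    have h := hφmul 0 0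
    rw [add_zero] at h
    have := mul_left_cancel₀ (hφne 0) (h.symm.trans (mul_one (φ 0)).symm)
    exact this
  have hφprod : ∀ (n : ℕ) (f : ℕ → X),
      φ (∑ k ∈ range n, f k) = ∏ k ∈ range n, φ (f k) := by
    intro n f
    induction n with
    | zero => simpa using hφ0
    | succ n ih => rw [Finset.sum_range_succ, Finset.prod_range_succ, hφmul, ih]
  have hφpow : ∀ (n : ℕ) (z : X), φ (n • z) = φ z ^ n := by
    intro n z
    induction n with
    | zero => simpa using hφ0
    | succ n ih => rw [succ_nsmul, hφmul, ih, pow_succ]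
  -- writing character values as exponentials
  set E : ℝ → ℂ := fun t => Complex.exp (2 * Real.pi * Complex.I * t) with hE
  set α : X → ℝ := fun z => (φ z).arg / (2 * Real.pi) with hα
  have hexp : ∀ z : X, φ z = E (α z) := by
    intro z
    have hpi : (Real.pi : ℂ) ≠ 0 := by exact_mod_cast Real.pi_ne_zero
    have h1 : (2 * (Real.pi:ℂ) * Complex.I * ((α z : ℝ) : ℂ)) = (φ z).arg * Complex.I := by
      rw [hα]
      push_cast
      field_simp
    rw [hE]
    simp only
    rw [h1]
    conv_lhs => rw [← Complex.norm_mul_exp_arg_mul_I (φ z)]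
    rw [hφabs z]
    simp
  have hEpow : ∀ (a : ℝ) (n : ℕ), E a ^ n = E (a * n) := by
    intro a n
    rw [hE]
    simp only
    rw [← Complex.exp_nat_mul]
    push_cast
    ring_nf
  have hEmul : ∀ a b : ℝ, E a * E b = E (a + b) := by
    intro a b
    rw [hE]
    simp only
    rw [← Complex.exp_add]
    push_cast
    ring_nf
  have hEprod : ∀ (n : ℕ) (f : ℕ → ℝ),
      (∏ k ∈ range n, E (f k)) = E (∑ k ∈ range n, f k) := by
    intro n f
    induction n with
    | zero => rw [Finset.prod_range_zero, Finset.sum_range_zero, hE]; simp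
    | succ n ih => rw [Finset.prod_range_succ, Finset.sum_range_succ, ih, hEmul]
  -- define data of the polynomial
  set y : X := T^[p] x with hy
  set P : Polynomial ℝ := ∑ k ∈ range L,
      (Polynomial.C (α ((N ^ k) y)) * binPoly k + Polynomial.C (α ((N ^ k) c)) * binPoly (k+1))
    with hP
  refine ⟨P, ?_, ?_⟩
  · -- degree bound
    refine Polynomial.natDegree_sum_le_of_forall_le _ _ (fun k hk => ?_)
    have hk' : k + 1 ≤ L := Finset.mem_range.mp hk
    refine (Polynomial.natDegree_add_le _ _).trans (max_le ?_ ?_)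
    · exact (Polynomial.natDegree_C_mul_le _ _).trans ((binPoly_deg k).trans (by omega))
    · exact (Polynomial.natDegree_C_mul_le _ _).trans ((binPoly_deg (k+1)).trans (by omega))
  · intro n q hn _
    -- reduce to the S-iterate
    have hTn : T^[n] x = ∑ k ∈ range L,
        (q.choose k • ((N ^ k) y) + q.choose (k+1) • ((N ^ k) c)) := by
      rw [hn, Function.iterate_add_apply, Nat.mul_comm q m, Function.iterate_mul, ← hy,
        hiter q y, hMq q, hGq q, end_sum_apply, end_sum_apply, ← Finset.sum_add_distrib]
      refine Finset.sum_congr rfl (fun k _ => ?_)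
      rfl
    -- evaluate the polynomial
    have hPeval : P.eval (q : ℝ) = ∑ k ∈ range L,
        (α ((N ^ k) y) * q.choose k + α ((N ^ k) c) * q.choose (k+1)) := by
      rw [hP, Polynomial.eval_finset_sum]
      refine Finset.sum_congr rfl (fun k _ => ?_)
      rw [Polynomial.eval_add, Polynomial.eval_mul, Polynomial.eval_mul, Polynomial.eval_C,
        Polynomial.eval_C, binPoly_eval, binPoly_eval]
    rw [hTn, hφprod, hPeval]
    have hterm : ∀ k, φ (q.choose k • ((N ^ k) y) + q.choose (k+1) • ((N ^ k) c))
        = E (α ((N ^ k) y) * q.choose k + α ((N ^ k) c) * q.choose (k+1)) := by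
      intro k
      rw [hφmul, hφpow, hφpow, hexp ((N ^ k) y), hexp ((N ^ k) c), hEpow, hEpow, hEmul]
    rw [Finset.prod_congr rfl (fun k _ => hterm k), hEprod]
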